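/- If a recursion of the form R(n) = R(n - s - Σ_{i=1}^p R(n-a_i)) + R(n - t - Σ_{i=1}^p R(n-b_i)) has a slow solution whose frequency sequence is α + β·r_m for all m ≥ 1, then α + 2β = 2p, α + β > 0, and β ≥ 0. -/

import Mathlib

lemma conolly_aux_sumval (M : ℕ) :
    (∑ j ∈ Finset.Icc 1 M, padicValNat 2 j) + (Nat.digits 2 M).sum = M := by
  have hfact : ∀ N : ℕ, padicValNat 2 (Nat.factorial N) = ∑ j ∈ Finset.Icc 1 N, padicValNat 2 j := by
    intro N
    induction N with
    | zero => simp [Nat.factorial]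
    | succ N ih =>
      rw [Nat.factorial_succ, padicValNat.mul (Nat.succ_ne_zero N) N.factorial_ne_zero, ih,
        Finset.sum_Icc_succ_top (by omega : 1 ≤ N + 1)]
      ring
  have h1 := sub_one_mul_padicValNat_factorial (p := 2) M
  have h2 : (Nat.digits 2 M).sum ≤ M := Nat.digit_sum_le 2 M
  rw [hfact M] at h1
  omega

lemma conolly_aux_s2_le (M : ℕ) (h : 1 ≤ M) : (Nat.digits 2 M).sum ≤ Nat.log 2 M + 1 := by
  have h1 : (Nat.digits 2 M).sum ≤ (Nat.digits 2 M).length • 1 :=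
    List.sum_le_card_nsmul _ 1 (fun x hx => by
      have := Nat.digits_lt_base (by norm_num) hx; omega)
  have h2 : (Nat.digits 2 M).length = Nat.log 2 M + 1 := Nat.digits_len 2 M (by norm_num) (by omega)
  simpa [h2] using h1

lemma conolly_aux_s2_pos (M : ℕ) (h : 1 ≤ M) : 1 ≤ (Nat.digits 2 M).sum := by
  by_contra hc
  have h0 : (Nat.digits 2 M).sum = 0 := by omega
  have hne : Nat.digits 2 M ≠ [] := Nat.digits_ne_nil_iff_ne_zero.mpr (by omega)
  exact Nat.getLast_digit_ne_zero 2 (show M ≠ 0 by omega)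
    (List.sum_eq_zero_iff.mp h0 _ (List.getLast_mem hne))

lemma conolly_aux_growth (a b c : ℕ) : ∃ k : ℕ, c < 2 ^ k ∧ a + b * k < 2 ^ k := by
  have hsq : ∀ k, 4 ≤ k → k * k ≤ 2 ^ k := by
    intro k hk
    induction k, hk using Nat.le_induction with
    | base => norm_num
    | succ k hk ih =>
      have h2 : 2 * 2 ^ k = 2 ^ (k + 1) := by ring
      nlinarith [ih]
  refine ⟨max 4 (a + b + c + 1), ?_, ?_⟩
  · have h4 : 4 ≤ max 4 (a + b + c + 1) := le_max_left _ _
    have hk1 : a + b + c + 1 ≤ max 4 (a + b + c + 1) := le_max_right _ _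
    have := hsq _ h4
    nlinarith
  · have h4 : 4 ≤ max 4 (a + b + c + 1) := le_max_left _ _
    have hk1 : a + b + c + 1 ≤ max 4 (a + b + c + 1) := le_max_right _ _
    have := hsq _ h4
    nlinarith

set_option maxHeartbeats 2000000 in
/-- If a 2-ary, order `p` nested recursion
`R(n) = R(n - s - Σᵢ R(n-aᵢ)) + R(n - t - Σᵢ R(n-bᵢ))` has a slow solution
whose frequency sequence is `α + β·r_m`, then `α + 2β = 2p`, `α + β > 0`, and `β ≥ 0`. -/
theorem conolly_like_necessary (p : ℕ) (hp : 1 ≤ p) (s t c : ℕ)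
    (a b : Fin p → ℕ) (ha : ∀ i, 1 ≤ a i) (hb : ∀ i, 1 ≤ b i)
    (R : ℕ → ℕ) (α β : ℤ)
    (hpos : ∀ n, c < n → (∀ i, a i < n ∧ b i < n) ∧
      s + ∑ i, R (n - a i) < n ∧ t + ∑ i, R (n - b i) < n)
    (hrec : ∀ n, c < n →
      R n = R (n - s - ∑ i, R (n - a i)) + R (n - t - ∑ i, R (n - b i)))
    (hR1 : ∀ n, 1 ≤ n → 1 ≤ R n)
    (hslow : ∀ n, 1 ≤ n → R (n + 1) = R n ∨ R (n + 1) = R n + 1)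
    (hinf : Filter.Tendsto R Filter.atTop Filter.atTop)
    (hfreq : ∀ m, 1 ≤ m →
      (({n : ℕ | 1 ≤ n ∧ R n = m}.ncard : ℤ)) = α + β * (padicValNat 2 m + 1)) :
    α + 2 * β = 2 * p ∧ 0 < α + β ∧ 0 ≤ β := by
  have hmono : ∀ m n : ℕ, 1 ≤ m → m ≤ n → R m ≤ R n := by
    intro m n h1 hmn
    induction n, hmn using Nat.le_induction with
    | base => exact le_rfl
    | succ n hn ih =>
      rcases hslow n (h1.trans hn) with h | h <;> omega
  have hstep : ∀ m n : ℕ, 1 ≤ m → m ≤ n → R n ≤ R m + (n - m) := by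
    intro m n h1 hmn
    induction n, hmn using Nat.le_induction with
    | base => omega
    | succ n hn ih =>
      rcases hslow n (h1.trans hn) with h | h <;> omega
  have hfin : ∀ m : ℕ, {n : ℕ | 1 ≤ n ∧ R n = m}.Finite := by
    intro m
    obtain ⟨N, hN⟩ := Filter.eventually_atTop.mp (Filter.tendsto_atTop.mp hinf (m + 1))
    apply Set.Finite.subset (Set.finite_Icc 1 N)
    rintro n ⟨hn1, hnm⟩
    rw [Set.mem_Icc]
    refine ⟨hn1, ?_⟩
    by_contra hc
    have := hN n (by omega)
    omega
  have hβ : 0 ≤ β := by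
    by_contra h
    push_neg at h
    set k := α.toNat with hk
    have h1 := hfreq (2 ^ k) Nat.one_le_two_pow
    rw [padicValNat.prime_pow] at h1
    have h0 : (0 : ℤ) ≤ (({n : ℕ | 1 ≤ n ∧ R n = 2 ^ k}.ncard : ℤ)) := Int.natCast_nonneg _
    have hα : α ≤ (k : ℤ) := Int.self_le_toNat α
    have hbk : β * ((k : ℤ) + 1) ≤ (-1) * ((k : ℤ) + 1) :=
      mul_le_mul_of_nonneg_right (by omega) (by positivity)
    linarith
  have hattain : ∀ m : ℕ, R 1 ≤ m → ∃ n, 1 ≤ n ∧ R n = m := by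
    intro m
    induction m with
    | zero => intro h; have := hR1 1 le_rfl; omega
    | succ m ih =>
      intro h
      rcases eq_or_lt_of_le h with heq | hlt
      · exact ⟨1, le_rfl, heq⟩
      · obtain ⟨n0, hn01, hn0⟩ := ih (by omega)
        have hev : ∃ j : ℕ, m + 1 ≤ R (n0 + j) := by
          obtain ⟨N, hN⟩ := Filter.eventually_atTop.mp (Filter.tendsto_atTop.mp hinf (m + 1))
          exact ⟨N, hN (n0 + N) (by omega)⟩
        classical
        obtain ⟨j', hj'⟩ : ∃ j', Nat.find hev = j' + 1 := by
          have hjne : Nat.find hev ≠ 0 := by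
            intro h0
            have h2 : m + 1 ≤ R n0 := by simpa [h0] using Nat.find_spec hev
            omega
          exact ⟨Nat.find hev - 1, by omega⟩
        have hj := Nat.find_spec hev
        have hmin : ¬ (m + 1 ≤ R (n0 + j')) := Nat.find_min hev (by omega)
        have hlo : R n0 ≤ R (n0 + j') := hmono n0 (n0 + j') hn01 (by omega)
        have hsl := hslow (n0 + j') (by omega)
        rw [hj'] at hj
        refine ⟨n0 + j' + 1, by omega, ?_⟩
        have : n0 + (j' + 1) = n0 + j' + 1 := by omega
        rw [this] at hj
        omega
  have hab : 0 < α + β := by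
    have hodd : padicValNat 2 (2 * R 1 + 1) = 0 :=
      padicValNat.eq_zero_of_not_dvd (by omega)
    have h1 := hfreq (2 * R 1 + 1) (by omega)
    rw [hodd] at h1
    obtain ⟨n0, hn01, hn0⟩ := hattain (2 * R 1 + 1) (by omega)
    have hne : {n : ℕ | 1 ≤ n ∧ R n = 2 * R 1 + 1}.Nonempty := ⟨n0, hn01, hn0⟩
    have hpos' := (Set.ncard_pos (hfin _)).mpr hne
    have : (0 : ℤ) < (({n : ℕ | 1 ≤ n ∧ R n = 2 * R 1 + 1}.ncard : ℤ)) := by exact_mod_cast hpos'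
    push_cast at h1
    linarith
  refine ⟨?_, hab, hβ⟩
  have hR1eq : R 1 = 1 := by
    have h1 := hfreq 1 le_rfl
    rw [show padicValNat 2 1 = 0 from padicValNat.one] at h1
    have hne : {n : ℕ | 1 ≤ n ∧ R n = 1}.Nonempty := by
      apply Set.nonempty_of_ncard_ne_zero
      intro h0
      rw [h0] at h1
      push_cast at h1
      linarith
    obtain ⟨n0, hn01, hn0⟩ := hne
    have := hmono 1 n0 le_rfl hn01
    have := hR1 1 le_rfl
    omega
  have hRle : ∀ n, 1 ≤ n → R n ≤ n := by
    intro n hn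
    have := hstep 1 n le_rfl hn
    rw [hR1eq] at this
    omega
  have key : ∀ M : ℕ, 1 ≤ M → ∃ L : ℕ, (∀ n, 1 ≤ n → (R n ≤ M ↔ n ≤ L)) ∧
      ((L : ℤ) = α * M + β * (2 * M - ((Nat.digits 2 M).sum : ℤ))) := by
    intro M hM
    obtain ⟨N, hN⟩ := Filter.eventually_atTop.mp (Filter.tendsto_atTop.mp hinf (M + 1))
    have hSfin : {n : ℕ | 1 ≤ n ∧ R n ≤ M}.Finite := by
      apply Set.Finite.subset (Set.finite_Icc 1 N)
      rintro n ⟨hn1, hnm⟩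
      rw [Set.mem_Icc]
      refine ⟨hn1, ?_⟩
      by_contra hc
      have := hN n (by omega)
      omega
    have hSne : hSfin.toFinset.Nonempty := by
      rw [Set.Finite.toFinset_nonempty]
      exact ⟨1, le_rfl, by rw [hR1eq]; exact hM⟩
    set L := hSfin.toFinset.max' hSne with hLdef
    have hLmem := hSfin.toFinset.max'_mem hSne
    rw [Set.Finite.mem_toFinset] at hLmem
    have hiff : ∀ n, 1 ≤ n → (R n ≤ M ↔ n ≤ L) := by
      intro n hn
      constructor
      · intro h
        exact hSfin.toFinset.le_max' n (by rw [Set.Finite.mem_toFinset]; exact ⟨hn, h⟩)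
      · intro h
        exact le_trans (hmono n L hn h) hLmem.2
    refine ⟨L, hiff, ?_⟩
    have hLcard : L = ∑ j ∈ Finset.Icc 1 M, ((Finset.Icc 1 L).filter (fun n => R n = j)).card := by
      have hcf := Finset.card_eq_sum_card_fiberwise (f := R) (s := Finset.Icc 1 L)
        (t := Finset.Icc 1 M) (fun n hn => by
          rw [Finset.mem_coe, Finset.mem_Icc] at hn
          rw [Finset.mem_coe, Finset.mem_Icc]
          exact ⟨hR1 n hn.1, (hiff n hn.1).mpr hn.2⟩)
      rw [Nat.card_Icc, Nat.add_sub_cancel] at hcf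
      exact hcf
    have hfiber : ∀ j, 1 ≤ j → j ≤ M →
        ({n : ℕ | 1 ≤ n ∧ R n = j}.ncard) = ((Finset.Icc 1 L).filter (fun n => R n = j)).card := by
      intro j hj1 hjM
      rw [← Set.ncard_coe_finset]
      congr 1
      ext n
      simp only [Finset.coe_filter, Set.mem_setOf_eq, Finset.mem_Icc]
      constructor
      · rintro ⟨hn1, hnj⟩
        exact ⟨⟨hn1, (hiff n hn1).mp (by omega)⟩, hnj⟩
      · rintro ⟨⟨hn1, _⟩, hnj⟩
        exact ⟨hn1, hnj⟩
    have hLZ : (L : ℤ) = ∑ j ∈ Finset.Icc 1 M, (({n : ℕ | 1 ≤ n ∧ R n = j}.ncard : ℤ)) := by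
      rw [hLcard]
      push_cast
      refine Finset.sum_congr rfl (fun j hj => ?_)
      rw [Finset.mem_Icc] at hj
      exact_mod_cast congrArg (Nat.cast (R := ℤ)) (hfiber j hj.1 hj.2).symm
    rw [hLZ]
    have hsum1 : ∑ j ∈ Finset.Icc 1 M, (({n : ℕ | 1 ≤ n ∧ R n = j}.ncard : ℤ))
        = ∑ j ∈ Finset.Icc 1 M, (α + β * ((padicValNat 2 j : ℤ) + 1)) := by
      refine Finset.sum_congr rfl (fun j hj => ?_)
      rw [Finset.mem_Icc] at hj
      exact hfreq j hj.1
    rw [hsum1]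
    have hsv := conolly_aux_sumval M
    have hsv2 : (∑ j ∈ Finset.Icc 1 M, (padicValNat 2 j : ℤ))
        = (M : ℤ) - ((Nat.digits 2 M).sum : ℤ) := by
      have : ((∑ j ∈ Finset.Icc 1 M, padicValNat 2 j : ℕ) : ℤ)
          = ∑ j ∈ Finset.Icc 1 M, (padicValNat 2 j : ℤ) := by push_cast; rfl
      omega
    have hT : ∑ j ∈ Finset.Icc 1 M, ((padicValNat 2 j : ℤ) + 1)
        = 2 * (M : ℤ) - ((Nat.digits 2 M).sum : ℤ) := by
      rw [Finset.sum_add_distrib, Finset.sum_const, Nat.card_Icc, Nat.add_sub_cancel, hsv2]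
      push_cast
      ring
    rw [Finset.sum_add_distrib, Finset.sum_const, ← Finset.mul_sum, hT, Nat.card_Icc,
      Nat.add_sub_cancel, nsmul_eq_mul]
    ring
  have herr : ∀ n : ℕ, 1 ≤ n → ((n : ℤ) ≤ (α + 2 * β) * R n ∧
      (α + 2 * β) * (R n : ℤ) ≤ (n : ℤ) - 1 + (α + 2 * β) + β * ((Nat.log 2 n : ℤ) + 1)) := by
    intro n hn
    have hm1 : 1 ≤ R n := hR1 n hn
    have hmn : R n ≤ n := hRle n hn
    obtain ⟨L, hLiff, hLval⟩ := key (R n) hm1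
    have hnL : n ≤ L := (hLiff n hn).mp le_rfl
    have hs2pos : (1 : ℤ) ≤ ((Nat.digits 2 (R n)).sum : ℤ) := by
      exact_mod_cast conolly_aux_s2_pos _ hm1
    constructor
    · have h1 : β * 1 ≤ β * ((Nat.digits 2 (R n)).sum : ℤ) :=
        mul_le_mul_of_nonneg_left hs2pos hβ
      have h2 : (n : ℤ) ≤ (L : ℤ) := by exact_mod_cast hnL
      have h3 : (α + 2 * β) * (R n : ℤ)
          = (L : ℤ) + β * ((Nat.digits 2 (R n)).sum : ℤ) := by rw [hLval]; ring
      linarith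
    · rcases Nat.lt_or_ge (R n) 2 with h2 | h2
      · have hRn1 : R n = 1 := by omega
        rw [hRn1]
        have hlg : (0 : ℤ) ≤ (Nat.log 2 n : ℤ) := by positivity
        have h4 : (0 : ℤ) ≤ β * ((Nat.log 2 n : ℤ) + 1) := mul_nonneg hβ (by linarith)
        have hn' : (1 : ℤ) ≤ (n : ℤ) := by exact_mod_cast hn
        push_cast
        linarith
      · obtain ⟨m', hm'⟩ : ∃ m', R n = m' + 1 := ⟨R n - 1, by omega⟩
        have hm'1 : 1 ≤ m' := by omega
        obtain ⟨L', hL'iff, hL'val⟩ := key m' hm'1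
        have hnL' : ¬ n ≤ L' := by
          intro hle
          have := (hL'iff n hn).mpr hle
          omega
        have hL'n : (L' : ℤ) ≤ (n : ℤ) - 1 := by omega
        have hs2le : ((Nat.digits 2 m').sum : ℤ) ≤ (Nat.log 2 n : ℤ) + 1 := by
          have h1 := conolly_aux_s2_le m' hm'1
          have h2 : Nat.log 2 m' ≤ Nat.log 2 n := Nat.log_mono_right (by omega)
          omega
        have hmul : β * ((Nat.digits 2 m').sum : ℤ) ≤ β * ((Nat.log 2 n : ℤ) + 1) :=
          mul_le_mul_of_nonneg_left hs2le hβ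
        have hexp : (α + 2 * β) * (R n : ℤ)
            = (L' : ℤ) + β * ((Nat.digits 2 m').sum : ℤ) + (α + 2 * β) := by
          rw [hL'val, hm']
          push_cast
          ring
        linarith
  by_contra hne
  have hD1 : (1 : ℤ) ≤ α + 2 * β := by linarith
  obtain ⟨k, hck, hbig⟩ := conolly_aux_growth
    ((α + 2 * β) * ((s : ℤ) + t + (∑ i, (a i : ℤ)) + (∑ i, (b i : ℤ))
      + 2 * (α + 2 * β) + 2 * β)).toNat
    (2 * (α + 2 * β) * β).toNat c
  set n := 2 ^ k with hn
  have hn1 : 1 ≤ n := Nat.one_le_two_pow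
  have hcn : c < n := hck
  have hlogn : Nat.log 2 n = k := Nat.log_pow (by norm_num) k
  obtain ⟨hain, hsa, hsb⟩ := hpos n hcn
  have hrecn := hrec n hcn
  have hm1 : 1 ≤ R n := hR1 n hn1
  have hu1 : 1 ≤ n - s - ∑ i, R (n - a i) := by omega
  have hv1 : 1 ≤ n - t - ∑ i, R (n - b i) := by omega
  have hule : n - s - ∑ i, R (n - a i) ≤ n := by omega
  have hvle : n - t - ∑ i, R (n - b i) ≤ n := by omega
  obtain ⟨huL, huU⟩ := herr _ hu1
  obtain ⟨hvL, hvU⟩ := herr _ hv1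
  obtain ⟨hnL, hnU⟩ := herr n hn1
  rw [hlogn] at hnU
  have hlogu : (Nat.log 2 (n - s - ∑ i, R (n - a i)) : ℤ) + 1 ≤ (k : ℤ) + 1 := by
    have := Nat.log_mono_right (b := 2) hule
    omega
  have hlogv : (Nat.log 2 (n - t - ∑ i, R (n - b i)) : ℤ) + 1 ≤ (k : ℤ) + 1 := by
    have := Nat.log_mono_right (b := 2) hvle
    omega
  have hmulu : β * ((Nat.log 2 (n - s - ∑ i, R (n - a i)) : ℤ) + 1) ≤ β * ((k : ℤ) + 1) :=
    mul_le_mul_of_nonneg_left hlogu hβ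
  have hmulv : β * ((Nat.log 2 (n - t - ∑ i, R (n - b i)) : ℤ) + 1) ≤ β * ((k : ℤ) + 1) :=
    mul_le_mul_of_nonneg_left hlogv hβ
  have hucast : ((n - s - ∑ i, R (n - a i) : ℕ) : ℤ)
      = (n : ℤ) - s - ((∑ i, R (n - a i) : ℕ) : ℤ) := by omega
  have hvcast : ((n - t - ∑ i, R (n - b i) : ℕ) : ℤ)
      = (n : ℤ) - t - ((∑ i, R (n - b i) : ℕ) : ℤ) := by omega
  have hSaU : ((∑ i, R (n - a i) : ℕ) : ℤ) ≤ (p : ℤ) * (R n : ℤ) := by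
    have h1 : ∀ i : Fin p, R (n - a i) ≤ R n := fun i =>
      hmono _ _ (by have := (hain i).1; omega) (Nat.sub_le n (a i))
    have h2 : (∑ i, R (n - a i)) ≤ ∑ _i : Fin p, R n :=
      Finset.sum_le_sum (fun i _ => h1 i)
    have h3 : ∑ _i : Fin p, R n = p * R n := by
      simp [Finset.sum_const, Finset.card_univ]
    rw [h3] at h2
    exact_mod_cast h2
  have hSbU : ((∑ i, R (n - b i) : ℕ) : ℤ) ≤ (p : ℤ) * (R n : ℤ) := by
    have h1 : ∀ i : Fin p, R (n - b i) ≤ R n := fun i =>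
      hmono _ _ (by have := (hain i).2; omega) (Nat.sub_le n (b i))
    have h2 : (∑ i, R (n - b i)) ≤ ∑ _i : Fin p, R n :=
      Finset.sum_le_sum (fun i _ => h1 i)
    have h3 : ∑ _i : Fin p, R n = p * R n := by
      simp [Finset.sum_const, Finset.card_univ]
    rw [h3] at h2
    exact_mod_cast h2
  have hSaL : (p : ℤ) * (R n : ℤ) - (∑ i, (a i : ℤ)) ≤ ((∑ i, R (n - a i) : ℕ) : ℤ) := by
    have h1 : ∀ i : Fin p, R n ≤ R (n - a i) + a i := by
      intro i
      have hai : a i < n := (hain i).1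
      have h2 := hstep (n - a i) n (by omega) (Nat.sub_le n (a i))
      have h3 : n - (n - a i) = a i := by omega
      omega
    have h2 : ∑ _i : Fin p, R n ≤ ∑ i, (R (n - a i) + a i) :=
      Finset.sum_le_sum (fun i _ => h1 i)
    have h3 : ∑ _i : Fin p, R n = p * R n := by
      simp [Finset.sum_const, Finset.card_univ]
    rw [h3, Finset.sum_add_distrib] at h2
    have h4 : ((p * R n : ℕ) : ℤ) ≤ (((∑ i, R (n - a i)) + ∑ i, a i : ℕ) : ℤ) := by
      exact_mod_cast h2
    push_cast at h4
    push_cast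
    linarith
  have hSbL : (p : ℤ) * (R n : ℤ) - (∑ i, (b i : ℤ)) ≤ ((∑ i, R (n - b i) : ℕ) : ℤ) := by
    have h1 : ∀ i : Fin p, R n ≤ R (n - b i) + b i := by
      intro i
      have hbi : b i < n := (hain i).2
      have h2 := hstep (n - b i) n (by omega) (Nat.sub_le n (b i))
      have h3 : n - (n - b i) = b i := by omega
      omega
    have h2 : ∑ _i : Fin p, R n ≤ ∑ i, (R (n - b i) + b i) :=
      Finset.sum_le_sum (fun i _ => h1 i)
    have h3 : ∑ _i : Fin p, R n = p * R n := by
      simp [Finset.sum_const, Finset.card_univ]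
    rw [h3, Finset.sum_add_distrib] at h2
    have h4 : ((p * R n : ℕ) : ℤ) ≤ (((∑ i, R (n - b i)) + ∑ i, b i : ℕ) : ℤ) := by
      exact_mod_cast h2
    push_cast at h4
    push_cast
    linarith
  have hmsplit : (α + 2 * β) * (R n : ℤ)
      = (α + 2 * β) * (R (n - s - ∑ i, R (n - a i)) : ℤ)
        + (α + 2 * β) * (R (n - t - ∑ i, R (n - b i)) : ℤ) := by
    rw [hrecn]
    push_cast
    ring
  have hexp4 : ((α + 2 * β) + 2 * (p : ℤ)) * (R n : ℤ)
      = (α + 2 * β) * (R n : ℤ) + 2 * ((p : ℤ) * (R n : ℤ)) := by ring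
  have hF3 : 2 * (n : ℤ) - s - t ≤ ((α + 2 * β) + 2 * (p : ℤ)) * (R n : ℤ) := by
    linarith [huL, hvL, hSaU, hSbU, hmsplit, hucast, hvcast, hexp4]
  have hF4 : ((α + 2 * β) + 2 * (p : ℤ)) * (R n : ℤ)
      ≤ 2 * (n : ℤ) - s - t + (∑ i, (a i : ℤ)) + (∑ i, (b i : ℤ))
        + 2 * (α + 2 * β) + 2 * β * ((k : ℤ) + 1) := by
    linarith [huU, hvU, hSaL, hSbL, hmsplit, hucast, hvcast, hmulu, hmulv, hexp4]
  have hG1 : ((α + 2 * β) - 2 * (p : ℤ)) * (R n : ℤ)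
      ≤ (s : ℤ) + t + 2 * (α + 2 * β) + 2 * β * ((k : ℤ) + 1) - 2 := by
    have hid : ((α + 2 * β) - 2 * (p : ℤ)) * (R n : ℤ)
        = 2 * ((α + 2 * β) * (R n : ℤ)) - ((α + 2 * β) + 2 * (p : ℤ)) * (R n : ℤ) := by ring
    linarith [hnU, hF3]
  have hG2 : (2 * (p : ℤ) - (α + 2 * β)) * (R n : ℤ)
      ≤ (∑ i, (a i : ℤ)) + (∑ i, (b i : ℤ)) + 2 * (α + 2 * β)
        + 2 * β * ((k : ℤ) + 1) - s - t := by
    have hid : (2 * (p : ℤ) - (α + 2 * β)) * (R n : ℤ)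
        = ((α + 2 * β) + 2 * (p : ℤ)) * (R n : ℤ) - 2 * ((α + 2 * β) * (R n : ℤ)) := by ring
    linarith [hnL, hF4]
  have hAnn : (0 : ℤ) ≤ ∑ i, (a i : ℤ) := Finset.sum_nonneg (fun i _ => by positivity)
  have hBnn : (0 : ℤ) ≤ ∑ i, (b i : ℤ) := Finset.sum_nonneg (fun i _ => by positivity)
  have hβk : (0 : ℤ) ≤ β * ((k : ℤ) + 1) := mul_nonneg hβ (by positivity)
  have hQ : (R n : ℤ) ≤ (s : ℤ) + t + (∑ i, (a i : ℤ)) + (∑ i, (b i : ℤ))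
      + 2 * (α + 2 * β) + 2 * β * ((k : ℤ) + 1) := by
    rcases lt_or_gt_of_ne hne with hlt | hgt
    · have h1 : (R n : ℤ) ≤ (2 * (p : ℤ) - (α + 2 * β)) * (R n : ℤ) :=
        le_mul_of_one_le_left (by positivity) (by omega)
      linarith
    · have h1 : (R n : ℤ) ≤ ((α + 2 * β) - 2 * (p : ℤ)) * (R n : ℤ) :=
        le_mul_of_one_le_left (by positivity) (by omega)
      linarith
  have hfinal : (n : ℤ) ≤ (α + 2 * β) * ((s : ℤ) + t + (∑ i, (a i : ℤ)) + (∑ i, (b i : ℤ))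
      + 2 * (α + 2 * β) + 2 * β * ((k : ℤ) + 1)) :=
    hnL.trans (mul_le_mul_of_nonneg_left hQ (by linarith))
  have hexp2 : (α + 2 * β) * ((s : ℤ) + t + (∑ i, (a i : ℤ)) + (∑ i, (b i : ℤ))
      + 2 * (α + 2 * β) + 2 * β * ((k : ℤ) + 1))
      = ((α + 2 * β) * ((s : ℤ) + t + (∑ i, (a i : ℤ)) + (∑ i, (b i : ℤ))
        + 2 * (α + 2 * β) + 2 * β)) + (2 * (α + 2 * β) * β) * (k : ℤ) := by ring
  have hle0 : ((α + 2 * β) * ((s : ℤ) + t + (∑ i, (a i : ℤ)) + (∑ i, (b i : ℤ))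
      + 2 * (α + 2 * β) + 2 * β))
      ≤ (((α + 2 * β) * ((s : ℤ) + t + (∑ i, (a i : ℤ)) + (∑ i, (b i : ℤ))
        + 2 * (α + 2 * β) + 2 * β)).toNat : ℤ) := Int.self_le_toNat _
  have hle1 : (2 * (α + 2 * β) * β) * (k : ℤ) ≤ ((2 * (α + 2 * β) * β).toNat : ℤ) * (k : ℤ) :=
    mul_le_mul_of_nonneg_right (Int.self_le_toNat _) (by positivity)
  have hbigZ : (((α + 2 * β) * ((s : ℤ) + t + (∑ i, (a i : ℤ)) + (∑ i, (b i : ℤ))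
      + 2 * (α + 2 * β) + 2 * β)).toNat : ℤ)
      + ((2 * (α + 2 * β) * β).toNat : ℤ) * (k : ℤ) < (n : ℤ) := by
    exact_mod_cast hbig
  linarith [hfinal, hexp2, hle0, hle1, hbigZ]
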